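/- With q₁, q₂ ≥ 0, ε₁, ε₂ > 0, τ = −(ε₁+ε₂+q₁+q₂), d = ε₁ε₂+ε₂q₁+ε₁q₂, and C* = (1/(2τ))·[[d+ε₁², d+ε₁ε₂],[d+ε₁ε₂, d+ε₂²]], one has det(C*) = d(ε₁−ε₂)²/(4τ²). Consequently C* is invertible if and only if ε₁ ≠ ε₂; and when ε₁ = ε₂, the vector (1, −1)ᵀ lies in the kernel of C* (the stationary covariance is degenerate and the stationary distribution collapses onto the one-dimensional synchronization manifold X¹ = X²). -/

import Mathlib

open Matrix

/-- With `q₁, q₂ ≥ 0`, `ε₁, ε₂ > 0`, `τ = −(ε₁+ε₂+q₁+q₂)`,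
`d = ε₁ε₂+ε₂q₁+ε₁q₂`, and `C* = (1/(2τ))·[[d+ε₁², d+ε₁ε₂],[d+ε₁ε₂, d+ε₂²]]`, one has
`det C* = d(ε₁−ε₂)²/(4τ²)`. Consequently `C*` is invertible iff `ε₁ ≠ ε₂`; and when
`ε₁ = ε₂` the vector `(1, −1)ᵀ` lies in the kernel of `C*` (the stationary covariance is
degenerate and the stationary distribution collapses onto the synchronization manifold
`X¹ = X²`). -/
theorem two_agent_covariance_det_and_degeneracy
    (q₁ q₂ ε₁ ε₂ : ℝ) (hq₁ : 0 ≤ q₁) (hq₂ : 0 ≤ q₂) (hε₁ : 0 < ε₁) (hε₂ : 0 < ε₂)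
    (τ d : ℝ)
    (hτ : τ = -(ε₁ + ε₂ + q₁ + q₂)) (hd : d = ε₁ * ε₂ + ε₂ * q₁ + ε₁ * q₂)
    (Cstar : Matrix (Fin 2) (Fin 2) ℝ)
    (hC : Cstar = (1 / (2 * τ)) •
      !![d + ε₁ ^ 2, d + ε₁ * ε₂; d + ε₁ * ε₂, d + ε₂ ^ 2]) :
    Cstar.det = d * (ε₁ - ε₂) ^ 2 / (4 * τ ^ 2) ∧
    (IsUnit Cstar ↔ ε₁ ≠ ε₂) ∧
    (ε₁ = ε₂ → Cstar.mulVec ![1, -1] = 0) := by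
  have hτne : τ ≠ 0 := by nlinarith
  have hdpos : 0 < d := by nlinarith
  have hdet : Cstar.det = d * (ε₁ - ε₂) ^ 2 / (4 * τ ^ 2) := by
    subst hC
    rw [det_smul, det_fin_two_of, Fintype.card_fin]
    field_simp
    ring
  refine ⟨hdet, ?_, ?_⟩
  · rw [Matrix.isUnit_iff_isUnit_det, isUnit_iff_ne_zero, hdet]
    constructor
    · intro h he
      apply h
      rw [he]
      ring
    · intro h
      have h1 : ε₁ - ε₂ ≠ 0 := sub_ne_zero.mpr h
      exact ne_of_gt (by positivity)
  · intro he
    subst hC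
    funext i
    fin_cases i <;>
      simp [Matrix.mulVec, dotProduct, Fin.sum_univ_two, he] <;> ring
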